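/- arXiv:1504.01117 — 2 statements merged into one kernel-verified Lean document; each statement's English description precedes it below -/
import Mathlib

section
/- Let $w \in \mathbb{R}^D$, let $\{v^1, \ldots, v^d\}$ be pairwise orthogonal vectors with $\|v^i\|_2 = L$, and $\mathcal{HC} = \{w + \sum_{i=1}^d f_i v^i : f_i \in [0,1]\}$. Let $e = v^1/L$, let $z$ be a unit vector with $z \cdot e \ge \cos\theta$ for some $0 < \theta < \pi/2$, and let $0 < \beta < 1$. Set $m = \min_{y \in \mathcal{HC}} y \cdot z$, $M = \max_{y \in \mathcal{HC}} y \cdot z$, and $\mathcal{HC}_l = \{y \in \mathcal{HC} : z \cdot y \le m + \beta(M - m)\}$. Then with $\epsilon = 8 \sin(\theta/2)\sqrt{d}$: $\max_{y \in \mathcal{HC}_l} e \cdot y - \min_{y \in \mathcal{HC}_l} e \cdot y \le L(\beta + \epsilon)$. -/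
open scoped RealInnerProductSpace

private lemma cut_aux2 (L s t cI : ℝ) (hL : 0 < L) (hs0 : 0 ≤ s) (hst : s ≤ t)
    (hlb : L * (1 - 2 * s ^ 2) ≤ cI) (h1 : 8 * t < 1) : 31 / 32 * L ≤ cI := by
  have hs8 : s < 1 / 8 := lt_of_le_of_lt hst (by linarith)
  have hsq2 : s ^ 2 ≤ 1 / 64 := by nlinarith
  nlinarith

private lemma cut_aux (L β x S t cI : ℝ) (hL : 0 < L) (hβ0 : 0 < β) (hβ1 : β < 1)
    (hx0 : 0 ≤ x) (hx1 : x ≤ 1) (hS0 : 0 ≤ S) (ht0 : 0 ≤ t)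
    (hScI : S ≤ 2 * L * t) (hcpos : 0 < cI) (hcon : x * cI ≤ β * (S + cI))
    (hclb : 8 * t < 1 → 31 / 32 * L ≤ cI) :
    x ≤ β + 8 * t := by
  by_cases h1 : 1 ≤ 8 * t
  · linarith
  · push_neg at h1
    have hc := hclb h1
    by_cases hfb : x ≤ β
    · linarith
    · push_neg at hfb
      have h5 : (x - β) * (31 / 32 * L) ≤ (x - β) * cI :=
        mul_le_mul_of_nonneg_left hc (by linarith)
      have h6 : (x - β) * cI ≤ β * S := by nlinarith
      have h8 : (x - β) * (31 / 32 * L) ≤ 2 * L * t := by nlinarith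
      nlinarith [mul_nonneg hL.le ht0]

theorem cut_lemma_left
    (D d : ℕ) (L : ℝ) (hL : 0 < L)
    (w : EuclideanSpace ℝ (Fin D)) (v : Fin d → EuclideanSpace ℝ (Fin D))
    (horth : ∀ i j, i ≠ j → ⟪v i, v j⟫ = 0)
    (hlen : ∀ i, ‖v i‖ = L) (hd : 0 < d)
    (HC : Set (EuclideanSpace ℝ (Fin D)))
    (hHC : HC = {p | ∃ f : Fin d → ℝ, (∀ i, f i ∈ Set.Icc (0:ℝ) 1) ∧
      p = w + ∑ i, f i • v i})
    (e : EuclideanSpace ℝ (Fin D)) (he : e = (1 / L) • v ⟨0, hd⟩)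
    (z : EuclideanSpace ℝ (Fin D)) (hz : ‖z‖ = 1)
    (θ : ℝ) (hθ0 : 0 < θ) (hθ1 : θ < Real.pi / 2)
    (hangle : Real.cos θ ≤ ⟪z, e⟫)
    (β : ℝ) (hβ0 : 0 < β) (hβ1 : β < 1)
    (m M : ℝ)
    (hm : m = sInf ((fun y => ⟪y, z⟫) '' HC))
    (hM : M = sSup ((fun y => ⟪y, z⟫) '' HC))
    (HCl : Set (EuclideanSpace ℝ (Fin D)))
    (hHCl : HCl = {y ∈ HC | ⟪z, y⟫ ≤ m + β * (M - m)})
    (ε : ℝ) (hε : ε = 8 * Real.sin (θ / 2) * Real.sqrt d) :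
    sSup ((fun y => ⟪e, y⟫) '' HCl) - sInf ((fun y => ⟪e, y⟫) '' HCl)
      ≤ L * (β + ε) := by
  classical
  set i0 : Fin d := ⟨0, hd⟩ with hi0
  set c : Fin d → ℝ := fun i => ⟪z, v i⟫ with hcdef
  set s : ℝ := Real.sin (θ / 2) with hsdef
  have hπ := Real.pi_pos
  have hcosθ : 0 < Real.cos θ := Real.cos_pos_of_mem_Ioo ⟨by linarith, hθ1⟩
  have hs0 : 0 ≤ s := Real.sin_nonneg_of_nonneg_of_le_pi (by linarith) (by linarith)
  have hcos_id : Real.cos θ = 1 - 2 * s ^ 2 := by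
    have h1 := Real.sin_sq_add_cos_sq (θ / 2)
    have h2 : Real.cos θ = Real.cos (2 * (θ / 2)) := by congr 1; ring
    rw [h2, Real.cos_two_mul]; nlinarith
  have hvnorm : ∀ i, ⟪v i, v i⟫ = L ^ 2 := fun i => by
    rw [real_inner_self_eq_norm_sq, hlen]
  have henorm : ‖e‖ = 1 := by
    rw [he, norm_smul, hlen]
    rw [Real.norm_eq_abs, abs_of_pos (by positivity : (0:ℝ) < 1 / L)]
    field_simp
  have hev : ∀ i, ⟪e, v i⟫ = if i = i0 then L else 0 := by
    intro i
    rw [he, real_inner_smul_left]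
    by_cases h : i = i0
    · subst h; rw [hvnorm, if_pos rfl]; field_simp
    · rw [horth i0 i (fun hh => h hh.symm), if_neg h, mul_zero]
  have hinnerz : ∀ f : Fin d → ℝ, ⟪z, w + ∑ i, f i • v i⟫ = ⟪z, w⟫ + ∑ i, f i * c i := by
    intro f
    rw [inner_add_right, inner_sum]
    simp_rw [real_inner_smul_right]
    rfl
  have hinnere : ∀ f : Fin d → ℝ, ⟪e, w + ∑ i, f i • v i⟫ = ⟪e, w⟫ + f i0 * L := by
    intro f
    rw [inner_add_right, inner_sum]
    simp_rw [real_inner_smul_right, hev]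
    congr 1
    rw [Finset.sum_eq_single i0]
    · rw [if_pos rfl]
    · intro b _ hb; rw [if_neg hb, mul_zero]
    · intro h; exact absurd (Finset.mem_univ i0) h
  have hci0 : c i0 = L * ⟪z, e⟫ := by
    rw [hcdef]
    simp only [he, real_inner_smul_right]
    field_simp
  have hci0_lb : L * Real.cos θ ≤ c i0 := by
    rw [hci0]
    exact mul_le_mul_of_nonneg_left hangle hL.le
  have hci0_pos : 0 < c i0 := lt_of_lt_of_le (by positivity) hci0_lb
  -- Bessel bound on off-axis components
  have hON : Orthonormal ℝ (fun i => (1 / L) • v i) := by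
    rw [orthonormal_iff_ite]
    intro i j
    rw [real_inner_smul_left, real_inner_smul_right]
    by_cases h : i = j
    · subst h
      rw [hvnorm, if_pos rfl]; field_simp
    · rw [horth i j h, if_neg h]; ring
  have hze : ‖z - e‖ ^ 2 ≤ 4 * s ^ 2 := by
    have hns : ‖z - e‖ ^ 2 = ‖z‖ ^ 2 - 2 * ⟪z, e⟫ + ‖e‖ ^ 2 := norm_sub_sq_real z e
    rw [hns, hz, henorm]
    nlinarith
  have hsumsq : ∑ i ∈ Finset.univ.erase i0, (c i) ^ 2 ≤ L ^ 2 * (4 * s ^ 2) := by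
    have hb := hON.sum_inner_products_le (s := Finset.univ.erase i0) (z - e)
    have hterm : ∀ i ∈ Finset.univ.erase i0,
        ‖⟪(1 / L) • v i, z - e⟫‖ ^ 2 = (c i / L) ^ 2 := by
      intro i hi
      have hii : i ≠ i0 := Finset.ne_of_mem_erase hi
      rw [real_inner_smul_left, inner_sub_right]
      have h1 : ⟪v i, e⟫ = 0 := by
        rw [real_inner_comm, hev, if_neg hii]
      have h2 : ⟪v i, z⟫ = c i := real_inner_comm z (v i)
      rw [h1, h2, Real.norm_eq_abs, sq_abs]
      field_simp
      ring
    rw [Finset.sum_congr rfl hterm] at hb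
    have hb2 : ∑ i ∈ Finset.univ.erase i0, (c i / L) ^ 2 ≤ 4 * s ^ 2 := le_trans hb hze
    have : ∑ i ∈ Finset.univ.erase i0, (c i / L) ^ 2
        = (∑ i ∈ Finset.univ.erase i0, (c i) ^ 2) / L ^ 2 := by
      rw [Finset.sum_div]
      exact Finset.sum_congr rfl fun i _ => by ring
    rw [this, div_le_iff₀ (by positivity)] at hb2
    linarith [hb2]
  set S : ℝ := ∑ i ∈ Finset.univ.erase i0, |c i| with hSdef
  have hS0 : 0 ≤ S := Finset.sum_nonneg fun i _ => abs_nonneg _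
  have hSsq : S ^ 2 ≤ (d : ℝ) * (L ^ 2 * (4 * s ^ 2)) := by
    have h1 := sq_sum_le_card_mul_sum_sq (s := Finset.univ.erase i0) (f := fun i => |c i|)
    have h2 : ∑ i ∈ Finset.univ.erase i0, |c i| ^ 2
        = ∑ i ∈ Finset.univ.erase i0, (c i) ^ 2 :=
      Finset.sum_congr rfl fun i _ => sq_abs _
    have hcard : ((Finset.univ.erase i0).card : ℝ) ≤ (d : ℝ) := by
      have := Finset.card_erase_le (s := (Finset.univ : Finset (Fin d))) (a := i0)
      have h3 : (Finset.univ : Finset (Fin d)).card = d := Finset.card_univ.trans (Fintype.card_fin d)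
      exact_mod_cast le_trans this (by rw [h3])
    calc S ^ 2 ≤ ((Finset.univ.erase i0).card : ℝ) * ∑ i ∈ Finset.univ.erase i0, |c i| ^ 2 := h1
      _ = ((Finset.univ.erase i0).card : ℝ) * ∑ i ∈ Finset.univ.erase i0, (c i) ^ 2 := by rw [h2]
      _ ≤ (d : ℝ) * (L ^ 2 * (4 * s ^ 2)) := by
          apply mul_le_mul hcard hsumsq (Finset.sum_nonneg fun i _ => sq_nonneg _) (Nat.cast_nonneg d)
  have hsqrtd : (0:ℝ) ≤ Real.sqrt d := Real.sqrt_nonneg d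
  have hS_ub : S ≤ 2 * L * s * Real.sqrt d := by
    have hsq : (2 * L * s * Real.sqrt d) ^ 2 = (d : ℝ) * (L ^ 2 * (4 * s ^ 2)) := by
      rw [mul_pow, mul_pow, mul_pow, Real.sq_sqrt (Nat.cast_nonneg d)]; ring
    have hB0 : 0 ≤ 2 * L * s * Real.sqrt d := by positivity
    calc S = Real.sqrt (S ^ 2) := (Real.sqrt_sq hS0).symm
      _ ≤ Real.sqrt ((2 * L * s * Real.sqrt d) ^ 2) := Real.sqrt_le_sqrt (by rw [hsq]; exact hSsq)
      _ = 2 * L * s * Real.sqrt d := Real.sqrt_sq hB0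
  -- membership helper
  have hmem : ∀ f : Fin d → ℝ, (∀ i, f i ∈ Set.Icc (0:ℝ) 1) → w + ∑ i, f i • v i ∈ HC := by
    intro f hf; rw [hHC]; exact ⟨f, hf, rfl⟩
  -- the minimizer
  set g : Fin d → ℝ := fun i => if c i < 0 then 1 else 0 with hgdef
  have hg01 : ∀ i, g i ∈ Set.Icc (0:ℝ) 1 := by
    intro i; rw [hgdef]; dsimp only; split_ifs <;> simp
  have hgc : ∀ i, g i * c i = min (c i) 0 := by
    intro i; rw [hgdef]; dsimp only
    by_cases h : c i < 0
    · rw [if_pos h, one_mul, min_eq_left h.le]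
    · rw [if_neg h, zero_mul, min_eq_right (not_lt.mp h)]
  set ymin : EuclideanSpace ℝ (Fin D) := w + ∑ i, g i • v i with hymindef
  have hyminHC : ymin ∈ HC := hmem g hg01
  have hymin_val : ⟪z, ymin⟫ = ⟪z, w⟫ + ∑ i, min (c i) 0 := by
    rw [hymindef, hinnerz]
    congr 1
    exact Finset.sum_congr rfl fun i _ => hgc i
  have hterm_min : ∀ (f : Fin d → ℝ), (∀ i, f i ∈ Set.Icc (0:ℝ) 1) →
      ∀ i, min (c i) 0 ≤ f i * c i := by
    intro f hf i
    rcases le_or_gt 0 (c i) with h | h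
    · rw [min_eq_right h]; exact mul_nonneg (hf i).1 h
    · rw [min_eq_left h.le]
      have := mul_le_mul_of_nonpos_right (hf i).2 h.le
      linarith [this]
  have hterm_max : ∀ (f : Fin d → ℝ), (∀ i, f i ∈ Set.Icc (0:ℝ) 1) →
      ∀ i, f i * c i ≤ max (c i) 0 := by
    intro f hf i
    rcases le_or_gt 0 (c i) with h | h
    · rw [max_eq_left h]
      calc f i * c i ≤ 1 * c i := mul_le_mul_of_nonneg_right (hf i).2 h
        _ = c i := one_mul _
    · rw [max_eq_right h.le]
      exact mul_nonpos_of_nonneg_of_nonpos (hf i).1 h.le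
  -- bounds on the image of HC
  have hval : ∀ y ∈ HC, ∃ f : Fin d → ℝ, (∀ i, f i ∈ Set.Icc (0:ℝ) 1) ∧
      ⟪y, z⟫ = ⟪z, w⟫ + ∑ i, f i * c i ∧ ⟪e, y⟫ = ⟪e, w⟫ + f i0 * L := by
    intro y hy
    rw [hHC] at hy
    obtain ⟨f, hf, rfl⟩ := hy
    exact ⟨f, hf, by rw [real_inner_comm]; exact hinnerz f, hinnere f⟩
  have hne : ((fun y => ⟪y, z⟫) '' HC).Nonempty := ⟨_, ymin, hyminHC, rfl⟩
  have hbddB : BddBelow ((fun y => ⟪y, z⟫) '' HC) := by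
    refine ⟨⟪z, w⟫ + ∑ i, min (c i) 0, ?_⟩
    rintro x ⟨y, hy, rfl⟩
    dsimp only
    obtain ⟨f, hf, hv1, _⟩ := hval y hy
    rw [hv1]
    exact add_le_add_right (Finset.sum_le_sum fun i _ => hterm_min f hf i) _
  have hbddA : BddAbove ((fun y => ⟪y, z⟫) '' HC) := by
    refine ⟨⟪z, w⟫ + ∑ i, max (c i) 0, ?_⟩
    rintro x ⟨y, hy, rfl⟩
    dsimp only
    obtain ⟨f, hf, hv1, _⟩ := hval y hy
    rw [hv1]
    exact add_le_add_right (Finset.sum_le_sum fun i _ => hterm_max f hf i) _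
  have hm_ub : m ≤ ⟪z, w⟫ + ∑ i, min (c i) 0 := by
    rw [hm, ← hymin_val, real_inner_comm ymin z]
    exact csInf_le hbddB ⟨ymin, hyminHC, rfl⟩
  have hm_lb : ⟪z, w⟫ + ∑ i, min (c i) 0 ≤ m := by
    rw [hm]
    apply le_csInf hne
    rintro x ⟨y, hy, rfl⟩
    dsimp only
    obtain ⟨f, hf, hv1, _⟩ := hval y hy
    rw [hv1]
    exact add_le_add_right (Finset.sum_le_sum fun i _ => hterm_min f hf i) _
  have hM_ub : M ≤ ⟪z, w⟫ + ∑ i, max (c i) 0 := by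
    rw [hM]
    apply csSup_le hne
    rintro x ⟨y, hy, rfl⟩
    dsimp only
    obtain ⟨f, hf, hv1, _⟩ := hval y hy
    rw [hv1]
    exact add_le_add_right (Finset.sum_le_sum fun i _ => hterm_max f hf i) _
  have hmM : m ≤ M := by
    rw [hm, hM]
    exact csInf_le_csSup hne hbddB hbddA
  have hMm_abs : M - m ≤ ∑ i, |c i| := by
    have h1 : ∑ i, max (c i) 0 - ∑ i, min (c i) 0 = ∑ i, |c i| := by
      rw [← Finset.sum_sub_distrib]
      refine Finset.sum_congr rfl fun i _ => ?_
      rcases le_total 0 (c i) with h | h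
      · rw [max_eq_left h, min_eq_right h, sub_zero, abs_of_nonneg h]
      · rw [max_eq_right h, min_eq_left h, zero_sub, abs_of_nonpos h]
    linarith [hm_lb, hM_ub]
  have habs_split : ∑ i, |c i| = S + c i0 := by
    rw [hSdef, ← Finset.sum_erase_add Finset.univ (fun i => |c i|) (Finset.mem_univ i0),
      abs_of_pos hci0_pos]
  -- ymin ∈ HCl, so HCl is nonempty
  have hyminHCl : ymin ∈ HCl := by
    rw [hHCl]
    refine ⟨hyminHC, ?_⟩
    rw [hymin_val]
    have : β * (M - m) ≥ 0 := mul_nonneg hβ0.le (by linarith)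
    linarith [hm_lb]
  -- key upper bound on coefficients in HCl
  clear_value i0 c s S g ymin
  have hd1 : (1:ℝ) ≤ Real.sqrt d := by
    rw [show (1:ℝ) = Real.sqrt 1 by rw [Real.sqrt_one]]
    exact Real.sqrt_le_sqrt (by exact_mod_cast hd)
  have hst : s ≤ s * Real.sqrt d := le_mul_of_one_le_right hs0 hd1
  have ht0 : 0 ≤ s * Real.sqrt d := mul_nonneg hs0 hsqrtd
  have hε8 : ε = 8 * (s * Real.sqrt d) := by rw [hε]; ring
  have hε0 : 0 ≤ ε := by rw [hε8]; linarith
  have hclb : 8 * (s * Real.sqrt d) < 1 → 31 / 32 * L ≤ c i0 := by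
    intro h1
    refine cut_aux2 L s (s * Real.sqrt d) (c i0) hL hs0 hst ?_ h1
    calc L * (1 - 2 * s ^ 2) = L * Real.cos θ := by rw [hcos_id]
      _ ≤ c i0 := hci0_lb
  have hS_ub' : S ≤ 2 * L * (s * Real.sqrt d) := by linarith [hS_ub]
  have hkey : ∀ y ∈ HCl, ⟪e, w⟫ ≤ ⟪e, y⟫ ∧ ⟪e, y⟫ ≤ ⟪e, w⟫ + L * (β + ε) := by
    intro y hy
    rw [hHCl] at hy
    obtain ⟨hyHC, hycut⟩ := hy
    obtain ⟨f, hf, hv1, hv2⟩ := hval y hyHC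
    have hf0 : 0 ≤ f i0 := (hf i0).1
    have hf1 : f i0 ≤ 1 := (hf i0).2
    have hfL : 0 ≤ f i0 * L := mul_nonneg hf0 hL.le
    constructor
    · rw [hv2]; linarith
    · rw [hv2]
      -- constraint gives f i0 * c i0 ≤ β * (S + c i0)
      have hcon : f i0 * c i0 ≤ β * (S + c i0) := by
        have h1 : ⟪z, y⟫ = ⟪z, w⟫ + ∑ i, f i * c i := by
          rw [real_inner_comm]; exact hv1
        have h2 : ⟪z, w⟫ + ∑ i, f i * c i ≤ (⟪z, w⟫ + ∑ i, min (c i) 0) + β * (S + c i0) := by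
          rw [← habs_split]
          calc ⟪z, w⟫ + ∑ i, f i * c i ≤ m + β * (M - m) := h1 ▸ hycut
            _ ≤ (⟪z, w⟫ + ∑ i, min (c i) 0) + β * (M - m) := by linarith [hm_ub]
            _ ≤ (⟪z, w⟫ + ∑ i, min (c i) 0) + β * ∑ i, |c i| := by
                have := mul_le_mul_of_nonneg_left hMm_abs hβ0.le
                linarith
        have h3 : ∑ i, min (c i) 0 - min (c i0) 0 ≤ ∑ i, f i * c i - f i0 * c i0 := by
          rw [← Finset.sum_erase_add _ (fun i => min (c i) 0) (Finset.mem_univ i0),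
            ← Finset.sum_erase_add _ (fun i => f i * c i) (Finset.mem_univ i0)]
          have := Finset.sum_le_sum (s := Finset.univ.erase i0)
            (fun i _ => hterm_min f hf i)
          linarith
        have h4 : min (c i0) 0 = 0 := min_eq_right hci0_pos.le
        linarith
      have hfle : f i0 ≤ β + ε := by
        rw [hε8]
        exact cut_aux L β (f i0) S (s * Real.sqrt d) (c i0) hL hβ0 hβ1 hf0 hf1 hS0 ht0
          hS_ub' hci0_pos hcon hclb
      have h9 : f i0 * L ≤ L * (β + ε) := by
        have := mul_le_mul_of_nonneg_right hfle hL.le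
        linarith
      linarith
  -- conclude
  have hneL : ((fun y => ⟪e, y⟫) '' HCl).Nonempty := ⟨_, ymin, hyminHCl, rfl⟩
  have hsup : sSup ((fun y => ⟪e, y⟫) '' HCl) ≤ ⟪e, w⟫ + L * (β + ε) := by
    apply csSup_le hneL
    rintro x ⟨y, hy, rfl⟩
    exact (hkey y hy).2
  have hinf : ⟪e, w⟫ ≤ sInf ((fun y => ⟪e, y⟫) '' HCl) := by
    apply le_csInf hneL
    rintro x ⟨y, hy, rfl⟩
    exact (hkey y hy).1
  linarith
end

section
/- Under the same hypotheses as the previous statement, define $\mathcal{HC}_r = \{y \in \mathcal{HC} : z \cdot y > m + \beta(M - m)\}$, and assume $\mathcal{HC}_r$ is nonempty. Then with $\epsilon = 8 \sin(\theta/2)\sqrt{d}$: $\sup_{y \in \mathcal{HC}_r} e \cdot y - \inf_{y \in \mathcal{HC}_r} e \cdot y \le L(1 - \beta + \epsilon)$. -/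
open scoped RealInnerProductSpace

set_option maxHeartbeats 2000000 in
theorem cut_lemma_right
    (D d : ℕ) (L : ℝ) (hL : 0 < L)
    (w : EuclideanSpace ℝ (Fin D)) (v : Fin d → EuclideanSpace ℝ (Fin D))
    (horth : ∀ i j, i ≠ j → ⟪v i, v j⟫ = 0)
    (hlen : ∀ i, ‖v i‖ = L) (hd : 0 < d)
    (HC : Set (EuclideanSpace ℝ (Fin D)))
    (hHC : HC = {p | ∃ f : Fin d → ℝ, (∀ i, f i ∈ Set.Icc (0:ℝ) 1) ∧
      p = w + ∑ i, f i • v i})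
    (e : EuclideanSpace ℝ (Fin D)) (he : e = (1 / L) • v ⟨0, hd⟩)
    (z : EuclideanSpace ℝ (Fin D)) (hz : ‖z‖ = 1)
    (θ : ℝ) (hθ0 : 0 < θ) (hθ1 : θ < Real.pi / 2)
    (hangle : Real.cos θ ≤ ⟪z, e⟫)
    (β : ℝ) (hβ0 : 0 < β) (hβ1 : β < 1)
    (m M : ℝ)
    (hm : m = sInf ((fun y => ⟪y, z⟫) '' HC))
    (hM : M = sSup ((fun y => ⟪y, z⟫) '' HC))
    (HCr : Set (EuclideanSpace ℝ (Fin D)))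
    (hHCr : HCr = {y ∈ HC | m + β * (M - m) < ⟪z, y⟫})
    (hne : HCr.Nonempty)
    (ε : ℝ) (hε : ε = 8 * Real.sin (θ / 2) * Real.sqrt d) :
    sSup ((fun y => ⟪e, y⟫) '' HCr) - sInf ((fun y => ⟪e, y⟫) '' HCr)
      ≤ L * (1 - β + ε) := by
  classical
  set i0 : Fin d := ⟨0, hd⟩ with hi0
  set a : Fin d → ℝ := fun i => ⟪v i, z⟫ with ha
  -- inner products of cube points with z
  have hip : ∀ f : Fin d → ℝ, ⟪w + ∑ i, f i • v i, z⟫ = ⟪w, z⟫ + ∑ i, f i * a i := by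
    intro f
    rw [inner_add_left, sum_inner]
    congr 1
    exact Finset.sum_congr rfl fun i _ => real_inner_smul_left _ _ _
  -- inner products of e with edge vectors
  have hev : ∀ j, ⟪e, v j⟫ = if j = i0 then L else 0 := by
    intro j
    rw [he, real_inner_smul_left]
    by_cases h : j = i0
    · subst h
      rw [if_pos rfl, real_inner_self_eq_norm_sq, hlen]
      field_simp
    · rw [if_neg h, horth i0 j (fun hh => h hh.symm)]
      ring
  have hef : ∀ f : Fin d → ℝ, ⟪e, w + ∑ i, f i • v i⟫ = ⟪e, w⟫ + L * f i0 := by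
    intro f
    rw [inner_add_right, inner_sum]
    congr 1
    have : ∀ i, ⟪e, f i • v i⟫ = if i = i0 then L * f i else 0 := by
      intro i
      rw [real_inner_smul_right, hev i]
      by_cases h : i = i0 <;> simp [h] <;> ring
    rw [Finset.sum_congr rfl (fun i _ => this i)]
    simp
  -- e is a unit vector
  have hLne : L ≠ 0 := ne_of_gt hL
  have hne1 : ‖e‖ = 1 := by
    rw [he, norm_smul, hlen, Real.norm_eq_abs,
      abs_of_pos (by positivity : (0:ℝ) < 1/L)]
    field_simp
  -- positivity of cos
  have hcos : 0 < Real.cos θ :=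
    Real.cos_pos_of_mem_Ioo ⟨by linarith [Real.pi_pos], hθ1⟩
  have hvi0 : v i0 = L • e := by
    rw [he, smul_smul]; field_simp; rw [one_smul]
  have hai0 : a i0 = L * ⟪z, e⟫ := by
    rw [ha]
    show ⟪v i0, z⟫ = L * ⟪z, e⟫
    rw [hvi0, real_inner_smul_left, real_inner_comm]
  have hze1 : ⟪z, e⟫ ≤ 1 := by
    calc ⟪z, e⟫ ≤ ‖z‖ * ‖e‖ := real_inner_le_norm z e
    _ = 1 := by rw [hz, hne1]; ring
  have hai0pos : 0 < a i0 := by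
    rw [hai0]; exact mul_pos hL (lt_of_lt_of_le hcos hangle)
  -- the values of m and M
  set W : ℝ := ⟪w, z⟫ with hW
  set T : ℝ := ∑ i, max (a i) 0 with hT
  set t : ℝ := ∑ i, min (a i) 0 with ht
  have hMval : M = W + T := by
    rw [hM]
    apply IsGreatest.csSup_eq
    constructor
    · refine ⟨w + ∑ i, (if 0 ≤ a i then (1:ℝ) else 0) • v i, ?_, ?_⟩
      · rw [hHC]
        exact ⟨fun i => if 0 ≤ a i then (1:ℝ) else 0,
          fun i => by by_cases h : 0 ≤ a i <;> simp [h], rfl⟩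
      · beta_reduce
        rw [hip (fun i => if 0 ≤ a i then (1:ℝ) else 0)]
        congr 1
        apply Finset.sum_congr rfl
        intro i _
        by_cases h : 0 ≤ a i
        · simp [h, max_eq_left h]
        · simp [h, max_eq_right (le_of_not_ge h)]
    · rintro r ⟨y, hy, rfl⟩
      rw [hHC] at hy
      obtain ⟨f, hf, rfl⟩ := hy
      beta_reduce
      rw [hip]
      have : ∀ i, f i * a i ≤ max (a i) 0 := by
        intro i
        rcases le_or_gt 0 (a i) with h | h
        · calc f i * a i ≤ 1 * a i :=
            mul_le_mul_of_nonneg_right (hf i).2 h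
          _ = a i := one_mul _
          _ ≤ max (a i) 0 := le_max_left _ _
        · calc f i * a i ≤ 0 := mul_nonpos_of_nonneg_of_nonpos (hf i).1 h.le
          _ ≤ max (a i) 0 := le_max_right _ _
      exact add_le_add_right (Finset.sum_le_sum fun i _ => this i) W
  have hmval : m = W + t := by
    rw [hm]
    apply IsLeast.csInf_eq
    constructor
    · refine ⟨w + ∑ i, (if 0 ≤ a i then (0:ℝ) else 1) • v i, ?_, ?_⟩
      · rw [hHC]
        exact ⟨fun i => if 0 ≤ a i then (0:ℝ) else 1,
          fun i => by by_cases h : 0 ≤ a i <;> simp [h], rfl⟩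
      · beta_reduce
        rw [hip (fun i => if 0 ≤ a i then (0:ℝ) else 1)]
        congr 1
        apply Finset.sum_congr rfl
        intro i _
        by_cases h : 0 ≤ a i
        · simp [h, min_eq_right h]
        · simp [h, min_eq_left (le_of_not_ge h)]
    · rintro r ⟨y, hy, rfl⟩
      rw [hHC] at hy
      obtain ⟨f, hf, rfl⟩ := hy
      beta_reduce
      rw [hip]
      have : ∀ i, min (a i) 0 ≤ f i * a i := by
        intro i
        rcases le_or_gt 0 (a i) with h | h
        · calc min (a i) 0 ≤ 0 := min_le_right _ _
          _ ≤ f i * a i := mul_nonneg (hf i).1 h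
        · calc min (a i) 0 ≤ a i := min_le_left _ _
          _ = 1 * a i := (one_mul _).symm
          _ ≤ f i * a i := by
              have := (hf i).2
              nlinarith
      exact add_le_add_right (Finset.sum_le_sum fun i _ => this i) W
  -- S, the sum of |a i| off the first coordinate
  set S : ℝ := ∑ i ∈ Finset.univ.erase i0, |a i| with hS
  have hSnn : 0 ≤ S := Finset.sum_nonneg fun i _ => abs_nonneg _
  have hTt : T - t = ∑ i, |a i| := by
    rw [hT, ht, ← Finset.sum_sub_distrib]
    exact Finset.sum_congr rfl fun i _ => (max_sub_min_eq_abs' (a i) 0).trans (by simp)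
  have hTtS : T - t = a i0 + S := by
    rw [hTt, ← Finset.add_sum_erase _ _ (Finset.mem_univ i0), abs_of_pos hai0pos, hS]
  set c : ℝ := max 0 (β - S / a i0) with hc
  set Ew : ℝ := ⟪e, w⟫ with hEw
  -- bounds for points of HCr
  have key : ∀ y ∈ HCr, Ew + L * c ≤ ⟪e, y⟫ ∧ ⟪e, y⟫ ≤ Ew + L := by
    intro y hy
    rw [hHCr] at hy
    obtain ⟨hyHC, hylb⟩ := hy
    rw [hHC] at hyHC
    obtain ⟨f, hf, rfl⟩ := hyHC
    rw [hef]
    constructor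
    · have hfc : c ≤ f i0 := by
        rw [hc, max_le_iff]
        refine ⟨(hf i0).1, ?_⟩
        -- from the HCr condition
        rw [real_inner_comm, hip f, hmval, hMval] at hylb
        have h1 : β * (T - t) < (∑ i, f i * a i) - t := by linarith
        have h2 : (∑ i, f i * a i) - t = f i0 * a i0 +
            ∑ i ∈ Finset.univ.erase i0, (f i * a i - min (a i) 0) := by
          rw [ht, ← Finset.sum_sub_distrib,
            ← Finset.add_sum_erase _ _ (Finset.mem_univ i0)]
          have : min (a i0) 0 = 0 := min_eq_right hai0pos.le
          rw [this, sub_zero]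
        have h3 : ∑ i ∈ Finset.univ.erase i0, (f i * a i - min (a i) 0) ≤ S := by
          rw [hS]
          apply Finset.sum_le_sum
          intro i _
          rcases le_or_gt 0 (a i) with h | h
          · rw [min_eq_right h, sub_zero, abs_of_nonneg h]
            nlinarith [(hf i).1, (hf i).2]
          · rw [min_eq_left h.le, abs_of_neg h]
            nlinarith [(hf i).1, (hf i).2]
        have h4 : β * (a i0 + S) - S ≤ f i0 * a i0 := by
          rw [← hTtS]; linarith
        have hmul : (β - S / a i0) * a i0 = β * a i0 - S := by
          field_simp
        have hle : (β - S / a i0) * a i0 ≤ f i0 * a i0 := by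
          rw [hmul]; nlinarith
        exact le_of_mul_le_mul_right hle hai0pos
      nlinarith
    · nlinarith [(hf i0).2]
  -- the comparison β - ε ≤ c
  have hsnn : 0 ≤ Real.sin (θ / 2) :=
    Real.sin_nonneg_of_nonneg_of_le_pi (by linarith) (by nlinarith [Real.pi_pos])
  have hdnn : (1:ℝ) ≤ Real.sqrt d := by
    rw [show (1:ℝ) = Real.sqrt 1 by simp]
    exact Real.sqrt_le_sqrt (by exact_mod_cast hd)
  have hεc : β - ε ≤ c := by
    rcases le_or_gt (1/8 : ℝ) (Real.sin (θ / 2)) with h | h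
    · have : (1:ℝ) ≤ ε := by
        rw [hε]; nlinarith
      calc β - ε ≤ 0 := by linarith
      _ ≤ c := le_max_left _ _
    · -- analytic case
      have hcosθ : Real.cos θ = 1 - 2 * Real.sin (θ / 2) ^ 2 := by
        have := Real.sin_sq_eq_half_sub (θ / 2)
        rw [show 2 * (θ / 2) = θ by ring] at this
        linarith
      -- Bessel bound on S
      have hON : Orthonormal ℝ (fun i => (1/L) • v i) := by
        rw [orthonormal_iff_ite]
        intro i j
        rw [real_inner_smul_left, real_inner_smul_right]
        by_cases hij : i = j
        · subst hij
          rw [if_pos rfl, real_inner_self_eq_norm_sq, hlen]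
          field_simp
        · rw [if_neg hij, horth i j hij]; ring
      have hzeorth : ∀ i, i ≠ i0 → a i = ⟪v i, z - e⟫ := by
        intro i hi
        rw [inner_sub_right, ha]
        have : ⟪v i, e⟫ = 0 := by
          rw [real_inner_comm, hev i, if_neg hi]
        simp [this]
      have hbessel : ∑ i ∈ Finset.univ.erase i0, (a i)^2 ≤ L^2 * ‖z - e‖^2 := by
        have hb := hON.sum_inner_products_le (s := Finset.univ.erase i0) (z - e)
        have : ∀ i ∈ Finset.univ.erase i0,
            ‖⟪(1/L) • v i, z - e⟫‖ ^ 2 = (a i)^2 / L^2 := by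
          intro i hi
          rw [real_inner_smul_left, ← hzeorth i (Finset.mem_erase.mp hi).1]
          rw [Real.norm_eq_abs]
          rw [abs_mul, mul_pow, abs_of_pos (by positivity : (0:ℝ) < 1/L)]
          rw [sq_abs]
          field_simp
        rw [Finset.sum_congr rfl this] at hb
        rw [← Finset.sum_div] at hb
        rw [div_le_iff₀ (by positivity)] at hb
        linarith [hb]
      have hnze : ‖z - e‖^2 ≤ 4 * Real.sin (θ / 2) ^ 2 := by
        rw [norm_sub_sq_real, hz, hne1]
        have : Real.cos θ ≤ ⟪z, e⟫ := hangle
        rw [hcosθ] at this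
        nlinarith
      have hSsq : S^2 ≤ (d : ℝ) * (L^2 * (4 * Real.sin (θ / 2) ^ 2)) := by
        have hcs := sq_sum_le_card_mul_sum_sq (s := Finset.univ.erase i0)
          (f := fun i => |a i|)
        have hsq : ∑ i ∈ Finset.univ.erase i0, |a i| ^ 2
            = ∑ i ∈ Finset.univ.erase i0, (a i)^2 :=
          Finset.sum_congr rfl fun i _ => sq_abs _
        rw [hsq] at hcs
        have hcard : ((Finset.univ.erase i0).card : ℝ) ≤ (d : ℝ) := by
          have := Finset.card_erase_le (a := i0) (s := (Finset.univ : Finset (Fin d)))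
          have h2 : (Finset.univ : Finset (Fin d)).card = d := Finset.card_univ.trans (Fintype.card_fin d)
          exact_mod_cast le_trans this (le_of_eq h2)
        calc S^2 ≤ ((Finset.univ.erase i0).card : ℝ) * ∑ i ∈ Finset.univ.erase i0, (a i)^2 := hcs
        _ ≤ (d : ℝ) * (L^2 * (4 * Real.sin (θ / 2) ^ 2)) := by
            apply mul_le_mul hcard (le_trans hbessel (by nlinarith))
              (Finset.sum_nonneg fun i _ => sq_nonneg _) (by positivity)
      have hSle : S ≤ 2 * Real.sin (θ / 2) * L * Real.sqrt d := by
        have h1 : S^2 ≤ (2 * Real.sin (θ / 2) * L * Real.sqrt d)^2 := by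
          have hq : Real.sqrt d ^ 2 = (d:ℝ) :=
            Real.sq_sqrt (by positivity : (0:ℝ) ≤ (d:ℝ))
          calc S^2 ≤ (d : ℝ) * (L^2 * (4 * Real.sin (θ / 2) ^ 2)) := hSsq
          _ = (2 * Real.sin (θ / 2) * L * Real.sqrt d)^2 := by
              rw [mul_pow (2 * Real.sin (θ / 2) * L), hq]; ring
        calc S = Real.sqrt (S^2) := (Real.sqrt_sq hSnn).symm
        _ ≤ Real.sqrt ((2 * Real.sin (θ / 2) * L * Real.sqrt d)^2) :=
            Real.sqrt_le_sqrt h1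
        _ = 2 * Real.sin (θ / 2) * L * Real.sqrt d := Real.sqrt_sq (by positivity)
      -- a i0 lower bound
      have hai0lb : (31/32 : ℝ) * L ≤ a i0 := by
        rw [hai0]
        have : (31/32 : ℝ) ≤ ⟪z, e⟫ := by
          rw [hcosθ] at hangle
          nlinarith [mul_le_mul h.le h.le hsnn (by norm_num : (0:ℝ) ≤ 1/8)]
        nlinarith
      have hdiv : S / a i0 ≤ ε := by
        rw [div_le_iff₀ hai0pos, hε]
        have hsd : 0 ≤ Real.sin (θ / 2) * Real.sqrt d :=
          mul_nonneg hsnn (Real.sqrt_nonneg _)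
        calc S ≤ 2 * Real.sin (θ / 2) * L * Real.sqrt d := hSle
        _ ≤ 8 * Real.sin (θ / 2) * Real.sqrt d * ((31/32) * L) := by
            nlinarith [mul_nonneg hsd hL.le]
        _ ≤ 8 * Real.sin (θ / 2) * Real.sqrt d * a i0 :=
            mul_le_mul_of_nonneg_left hai0lb (by positivity)
      calc β - ε ≤ β - S / a i0 := by linarith
      _ ≤ c := le_max_right _ _
  -- conclude
  have hne' : ((fun y => ⟪e, y⟫) '' HCr).Nonempty := hne.image _
  have hsup : sSup ((fun y => ⟪e, y⟫) '' HCr) ≤ Ew + L := by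
    apply csSup_le hne'
    rintro r ⟨y, hy, rfl⟩
    exact (key y hy).2
  have hinf : Ew + L * c ≤ sInf ((fun y => ⟪e, y⟫) '' HCr) := by
    apply le_csInf hne'
    rintro r ⟨y, hy, rfl⟩
    exact (key y hy).1
  have : L * (1 - c) ≤ L * (1 - β + ε) := by
    apply mul_le_mul_of_nonneg_left _ hL.le
    linarith
  linarith
end
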